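/- Let X, E, Y be real normed vector spaces and (Ω, μ) a probability space. Let F : X → E and F* : X → E be arbitrary maps, r : E → E an arbitrary map, g* : X → Y an arbitrary map, h : E → Y Lipschitz continuous with constant L, and ℓ : Y × Y → ℝ Lipschitz in its first argument with constant K_a (uniformly in the second argument) and Lipschitz in its second argument with constant K_b (uniformly in the first argument). Let X1 : Ω → X, X2 : Ω → X, Y1 : Ω → Y be measurable, and assume that the functions ω ↦ ℓ(h(F(X1 ω)), Y1 ω), ω ↦ ℓ(h(F(X2 ω)), g*(X2 ω)), and each of the seven norm terms below are integrable with respect to μ. Then |∫ ℓ(h(F(X1 ω)), Y1 ω) dμ(ω) − ∫ ℓ(h(F(X2 ω)), g*(X2 ω)) dμ(ω)| ≤ K_a·L·∫ ( ‖F(X1 ω) − F*(X1 ω)‖ + ‖F*(X1 ω) − r(F*(X1 ω))‖ + ‖r(F*(X1 ω)) − r(F*(X2 ω))‖ + ‖r(F*(X2 ω)) − r(F(X2 ω))‖ + ‖r(F(X2 ω)) − F(X2 ω)‖ ) dμ(ω) + K_b·∫ ( ‖Y1 ω − g*(X1 ω)‖ + ‖g*(X1 ω) − g*(X2 ω)‖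 ) dμ(ω). -/

import Mathlib

open MeasureTheory

/-- The paper's Proposition in expectation: the difference between the first-task term of
the joint-training statistical risk and the distillation surrogate risk computed on
second-task data is controlled by the expected reconstruction, code and residual terms. -/
theorem expected_joint_vs_surrogate_bound
    {X E Y : Type*} [NormedAddCommGroup X] [NormedSpace ℝ X]
    [NormedAddCommGroup E] [NormedSpace ℝ E]
    [NormedAddCommGroup Y] [NormedSpace ℝ Y]
    [MeasurableSpace X] [MeasurableSpace Y]
    {Ω : Type*} [MeasurableSpace Ω] (μ : Measure Ω) [IsProbabilityMeasure μ]
    (F Fstar : X → E) (r : E → E) (gstar : X → Y)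
    (h : E → Y) (ℓ : Y × Y → ℝ) (L Ka Kb : ℝ)
    (hL : 0 ≤ L) (hKa : 0 ≤ Ka) (hKb : 0 ≤ Kb)
    (hLip : ∀ a b : E, ‖h a - h b‖ ≤ L * ‖a - b‖)
    (hℓa : ∀ (y : Y) (a b : Y), |ℓ (a, y) - ℓ (b, y)| ≤ Ka * ‖a - b‖)
    (hℓb : ∀ (y : Y) (a b : Y), |ℓ (y, a) - ℓ (y, b)| ≤ Kb * ‖a - b‖)
    (X1 X2 : Ω → X) (Y1 : Ω → Y)
    (hX1 : Measurable X1) (hX2 : Measurable X2) (hY1 : Measurable Y1)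
    (hInt1 : Integrable (fun ω => ℓ (h (F (X1 ω)), Y1 ω)) μ)
    (hInt2 : Integrable (fun ω => ℓ (h (F (X2 ω)), gstar (X2 ω))) μ)
    (hIntA : Integrable (fun ω => ‖F (X1 ω) - Fstar (X1 ω)‖) μ)
    (hIntB : Integrable (fun ω => ‖Fstar (X1 ω) - r (Fstar (X1 ω))‖) μ)
    (hIntC : Integrable (fun ω => ‖r (Fstar (X1 ω)) - r (Fstar (X2 ω))‖) μ)
    (hIntD : Integrable (fun ω => ‖r (Fstar (X2 ω)) - r (F (X2 ω))‖) μ)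
    (hIntE : Integrable (fun ω => ‖r (F (X2 ω)) - F (X2 ω)‖) μ)
    (hIntF : Integrable (fun ω => ‖Y1 ω - gstar (X1 ω)‖) μ)
    (hIntG : Integrable (fun ω => ‖gstar (X1 ω) - gstar (X2 ω)‖) μ) :
    |(∫ ω, ℓ (h (F (X1 ω)), Y1 ω) ∂μ) - ∫ ω, ℓ (h (F (X2 ω)), gstar (X2 ω)) ∂μ| ≤
      Ka * L *
        ∫ ω, (‖F (X1 ω) - Fstar (X1 ω)‖ + ‖Fstar (X1 ω) - r (Fstar (X1 ω))‖ +
          ‖r (Fstar (X1 ω)) - r (Fstar (X2 ω))‖ + ‖r (Fstar (X2 ω)) - r (F (X2 ω))‖ +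
          ‖r (F (X2 ω)) - F (X2 ω)‖) ∂μ +
      Kb * ∫ ω, (‖Y1 ω - gstar (X1 ω)‖ + ‖gstar (X1 ω) - gstar (X2 ω)‖) ∂μ := by

  set S : Ω → ℝ := fun ω => ‖F (X1 ω) - Fstar (X1 ω)‖ + ‖Fstar (X1 ω) - r (Fstar (X1 ω))‖ +
      ‖r (Fstar (X1 ω)) - r (Fstar (X2 ω))‖ + ‖r (Fstar (X2 ω)) - r (F (X2 ω))‖ +
      ‖r (F (X2 ω)) - F (X2 ω)‖ with hS
  set T : Ω → ℝ := fun ω => ‖Y1 ω - gstar (X1 ω)‖ + ‖gstar (X1 ω) - gstar (X2 ω)‖ with hT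
  have hSint : Integrable S μ := by
    exact (((hIntA.add hIntB).add hIntC).add hIntD).add hIntE
  have hTint : Integrable T μ := by exact hIntF.add hIntG
  have key : ∀ ω, |ℓ (h (F (X1 ω)), Y1 ω) - ℓ (h (F (X2 ω)), gstar (X2 ω))| ≤
      Ka * L * S ω + Kb * T ω := by
    intro ω
    have tri : ‖F (X1 ω) - F (X2 ω)‖ ≤ S ω := by
      have t1 : ‖F (X1 ω) - F (X2 ω)‖ ≤ ‖F (X1 ω) - Fstar (X1 ω)‖ +
          ‖Fstar (X1 ω) - r (Fstar (X1 ω))‖ + ‖r (Fstar (X1 ω)) - r (Fstar (X2 ω))‖ +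
          ‖r (Fstar (X2 ω)) - r (F (X2 ω))‖ + ‖r (F (X2 ω)) - F (X2 ω)‖ := by
        calc ‖F (X1 ω) - F (X2 ω)‖
            ≤ ‖F (X1 ω) - r (F (X2 ω))‖ + ‖r (F (X2 ω)) - F (X2 ω)‖ :=
              norm_sub_le_norm_sub_add_norm_sub _ _ _
          _ ≤ (‖F (X1 ω) - r (Fstar (X2 ω))‖ + ‖r (Fstar (X2 ω)) - r (F (X2 ω))‖) +
              ‖r (F (X2 ω)) - F (X2 ω)‖ := by
              gcongr; exact norm_sub_le_norm_sub_add_norm_sub _ _ _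
          _ ≤ ((‖F (X1 ω) - r (Fstar (X1 ω))‖ + ‖r (Fstar (X1 ω)) - r (Fstar (X2 ω))‖) +
              ‖r (Fstar (X2 ω)) - r (F (X2 ω))‖) + ‖r (F (X2 ω)) - F (X2 ω)‖ := by
              gcongr; exact norm_sub_le_norm_sub_add_norm_sub _ _ _
          _ ≤ (((‖F (X1 ω) - Fstar (X1 ω)‖ + ‖Fstar (X1 ω) - r (Fstar (X1 ω))‖) +
              ‖r (Fstar (X1 ω)) - r (Fstar (X2 ω))‖) + ‖r (Fstar (X2 ω)) - r (F (X2 ω))‖) +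
              ‖r (F (X2 ω)) - F (X2 ω)‖ := by
              gcongr; exact norm_sub_le_norm_sub_add_norm_sub _ _ _
          _ = _ := by ring
      simpa [hS] using t1
    have tri2 : ‖Y1 ω - gstar (X2 ω)‖ ≤ T ω := by
      simpa [hT] using norm_sub_le_norm_sub_add_norm_sub (Y1 ω) (gstar (X1 ω)) (gstar (X2 ω))
    have step : |ℓ (h (F (X1 ω)), Y1 ω) - ℓ (h (F (X2 ω)), gstar (X2 ω))| ≤
        Ka * ‖h (F (X1 ω)) - h (F (X2 ω))‖ + Kb * ‖Y1 ω - gstar (X2 ω)‖ := by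
      have e : ℓ (h (F (X1 ω)), Y1 ω) - ℓ (h (F (X2 ω)), gstar (X2 ω)) =
          (ℓ (h (F (X1 ω)), Y1 ω) - ℓ (h (F (X2 ω)), Y1 ω)) +
          (ℓ (h (F (X2 ω)), Y1 ω) - ℓ (h (F (X2 ω)), gstar (X2 ω))) := by ring
      rw [e]
      exact (abs_add_le _ _).trans (add_le_add (hℓa _ _ _) (hℓb _ _ _))
    calc |ℓ (h (F (X1 ω)), Y1 ω) - ℓ (h (F (X2 ω)), gstar (X2 ω))|
        ≤ Ka * ‖h (F (X1 ω)) - h (F (X2 ω))‖ + Kb * ‖Y1 ω - gstar (X2 ω)‖ := step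
      _ ≤ Ka * (L * ‖F (X1 ω) - F (X2 ω)‖) + Kb * T ω := by
          gcongr
          exact hLip _ _
      _ ≤ Ka * (L * S ω) + Kb * T ω := by gcongr
      _ = Ka * L * S ω + Kb * T ω := by ring
  have hdiff : |(∫ ω, ℓ (h (F (X1 ω)), Y1 ω) ∂μ) - ∫ ω, ℓ (h (F (X2 ω)), gstar (X2 ω)) ∂μ|
      ≤ ∫ ω, |ℓ (h (F (X1 ω)), Y1 ω) - ℓ (h (F (X2 ω)), gstar (X2 ω))| ∂μ := by
    rw [← integral_sub hInt1 hInt2]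
    simpa [Real.norm_eq_abs] using norm_integral_le_integral_norm (μ := μ) (fun ω => ℓ (h (F (X1 ω)), Y1 ω) - ℓ (h (F (X2 ω)), gstar (X2 ω)))
  refine hdiff.trans ?_
  have hmono : ∫ ω, |ℓ (h (F (X1 ω)), Y1 ω) - ℓ (h (F (X2 ω)), gstar (X2 ω))| ∂μ
      ≤ ∫ ω, (Ka * L * S ω + Kb * T ω) ∂μ := by
    refine integral_mono (hInt1.sub hInt2).abs ?_ key
    exact ((hSint.const_mul (Ka * L)).add (hTint.const_mul Kb))
  refine hmono.trans_eq ?_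
  rw [integral_add ((hSint.const_mul (Ka * L))) ((hTint.const_mul Kb)),
    integral_const_mul, integral_const_mul]
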